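/- For every real β > 0 and all integers k, j ≥ 0: ((2k+2β)(2j+2β) / ((k+2β)(j+2β))) · ∫_0^1 (d/dr)[J_k^{−1,2β}(2r−1)] · (d/dr)[J_j^{−1,2β}(2r−1)] · r^{2β+1} dr = δ_{k,j} · (2k+2β) · (1 − δ_{k,0}), where δ denotes the Kronecker delta. -/

import Mathlib

open Real MeasureTheory Finset

/-- Generalized binomial coefficient `C(x,k) = x(x-1)⋯(x-k+1)/k!`. -/
noncomputable def genBinom (x : ℝ) (k : ℕ) : ℝ :=
  (descPochhammer ℝ k).eval x / (Nat.factorial k : ℝ)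

/-- Generalized Jacobi polynomial `J_n^{α,β}(ζ)`. -/
noncomputable def genJacobi (α β : ℝ) (n : ℕ) (ζ : ℝ) : ℝ :=
  ∑ m ∈ Finset.range (n + 1),
    genBinom ((n : ℝ) + α) (n - m) * genBinom ((n : ℝ) + β) m *
      ((ζ - 1) / 2) ^ m * ((ζ + 1) / 2) ^ (n - m)


noncomputable def F (x : ℝ) (k : ℕ) : ℝ := ∏ i ∈ Finset.range k, (x - i)
noncomputable def G (x : ℝ) (k : ℕ) : ℝ := ∏ i ∈ Finset.range k, (x + i)

lemma F_zero (x : ℝ) : F x 0 = 1 := by simp [F]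
lemma F_succ (x : ℝ) (k : ℕ) : F x (k+1) = F x k * (x - k) := by
  simp [F, Finset.prod_range_succ]
lemma G_zero (x : ℝ) : G x 0 = 1 := by simp [G]
lemma G_succ (x : ℝ) (k : ℕ) : G x (k+1) = G x k * (x + k) := by
  simp [G, Finset.prod_range_succ]

lemma G_eq_neg_F (x : ℝ) (k : ℕ) : G x k = (-1)^k * F (-x) k := by
  induction k with
  | zero => simp [F_zero, G_zero]
  | succ k ih => rw [G_succ, F_succ, ih, pow_succ]; ring

/-- Chu–Vandermonde for falling factorials over ℝ. -/
lemma vandermondeF (n : ℕ) (x y : ℝ) :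
    ∑ m ∈ Finset.range (n+1), (n.choose m : ℝ) * F x m * F y (n - m) = F (x+y) n := by
  induction n with
  | zero => simp [F_zero]
  | succ n ih =>
    have S12 : (∑ m ∈ Finset.range (n+1), (n.choose m : ℝ) * F x m * F y (n-m+1))
          + (∑ m ∈ Finset.range (n+1), (n.choose m : ℝ) * F x (m+1) * F y (n-m))
        = F (x+y) (n+1) := by
      rw [← Finset.sum_add_distrib]
      have : ∀ m ∈ Finset.range (n+1),
          (n.choose m : ℝ) * F x m * F y (n-m+1) + (n.choose m : ℝ) * F x (m+1) * F y (n-m)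
          = ((n.choose m : ℝ) * F x m * F y (n-m)) * (x + y - n) := by
        intro m hm
        rw [Finset.mem_range] at hm
        have hmn : m ≤ n := by omega
        rw [F_succ y (n-m), F_succ x m]
        have : ((n - m : ℕ) : ℝ) = (n : ℝ) - m := by
          push_cast [Nat.cast_sub hmn]; ring
        rw [this]; ring
      rw [Finset.sum_congr rfl this, ← Finset.sum_mul, ih, ← F_succ]
    rw [← S12]
    rw [Finset.sum_range_succ' (fun m => ((n+1).choose m : ℝ) * F x m * F y (n+1-m))]
    have hsplit : ∀ i ∈ Finset.range (n+1),
        (((n+1).choose (i+1) : ℝ)) * F x (i+1) * F y (n+1-(i+1))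
        = (n.choose i : ℝ) * F x (i+1) * F y (n-i)
          + (n.choose (i+1) : ℝ) * F x (i+1) * F y (n-i) := by
      intro i hi
      have : (n+1).choose (i+1) = n.choose i + n.choose (i+1) := Nat.choose_succ_succ n i
      rw [show n+1-(i+1) = n-i from by omega, this]
      push_cast; ring
    rw [Finset.sum_congr rfl hsplit, Finset.sum_add_distrib]
    have hS1 : (∑ m ∈ Finset.range (n+1), (n.choose m : ℝ) * F x m * F y (n-m+1))
        = (∑ i ∈ Finset.range (n+1), (n.choose (i+1) : ℝ) * F x (i+1) * F y (n-i))
          + ((n+1).choose 0 : ℝ) * F x 0 * F y (n+1-0) := by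
      rw [Finset.sum_range_succ' (fun m => (n.choose m : ℝ) * F x m * F y (n-m+1)),
        Finset.sum_range_succ (fun i => (n.choose (i+1) : ℝ) * F x (i+1) * F y (n-i))]
      simp only [Nat.choose_succ_self, Nat.cast_zero, zero_mul, add_zero]
      congr 1
      · apply Finset.sum_congr rfl
        intro i hi
        rw [Finset.mem_range] at hi
        congr 2
        omega
      · simp
    rw [hS1]
    ring

lemma vandermondeG (n : ℕ) (x y : ℝ) :
    ∑ m ∈ Finset.range (n+1), (n.choose m : ℝ) * G x m * G y (n - m) = G (x+y) n := by
  have := vandermondeF n (-x) (-y)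
  rw [show -x + -y = -(x+y) by ring] at this
  rw [G_eq_neg_F, ← this, Finset.mul_sum]
  apply Finset.sum_congr rfl
  intro m hm
  rw [Finset.mem_range] at hm
  rw [G_eq_neg_F x, G_eq_neg_F y]
  have : ((-1:ℝ))^n = (-1)^m * (-1)^(n-m) := by
    rw [← pow_add]; congr 1; omega
  rw [this]; ring

lemma descPochhammer_eval_eq_F (x : ℝ) (k : ℕ) : (descPochhammer ℝ k).eval x = F x k := by
  induction k with
  | zero => simp [F_zero]
  | succ k ih => rw [descPochhammer_succ_eval, ih, F_succ]

lemma F_nat (n k : ℕ) : F (n : ℝ) k = (n.descFactorial k : ℝ) := by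
  rw [← descPochhammer_eval_eq_F, descPochhammer_eval_eq_descFactorial]

lemma F_self (n : ℕ) : F (n : ℝ) n = (n.factorial : ℝ) := by
  rw [F_nat, Nat.descFactorial_self]

lemma F_split (d : ℝ) (m n : ℕ) (h : m ≤ n) :
    F d (n+1) = F d (m+1) * G (d - n) (n - m) := by
  have hn : n + 1 = (m+1) + (n-m) := by omega
  rw [hn, F, Finset.prod_range_add, ← F]
  congr 1
  rw [G, ← Finset.prod_range_reflect]
  apply Finset.prod_congr rfl
  intro i hi
  rw [Finset.mem_range] at hi
  have h1 : m + 1 + (n - m - 1 - i) = n - i := by omega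
  rw [h1, Nat.cast_sub (by omega : i ≤ n)]
  ring

lemma G_split (x : ℝ) (j m : ℕ) (h : j ≤ m) :
    G x (m+1) = G x j * (x + j) * F (x + m) (m - j) := by
  have hm : m + 1 = (j+1) + (m-j) := by omega
  rw [hm, G, Finset.prod_range_add, ← G, G_succ]
  congr 1
  rw [F, ← Finset.prod_range_reflect]
  apply Finset.prod_congr rfl
  intro i hi
  rw [Finset.mem_range] at hi
  have h1 : j + 1 + (m - j - 1 - i) = m - i := by omega
  rw [h1, Nat.cast_sub (by omega : i ≤ m)]
  ring

lemma G_pos (x : ℝ) (k : ℕ) (hx : 0 < x) : 0 < G x k := by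
  rw [G]
  apply Finset.prod_pos
  intro i _
  positivity

lemma sumB (m : ℕ) (e : ℝ) (he : 0 < e + 1) :
    ∑ j ∈ Finset.range (m+1), (-1:ℝ)^j * (m.choose j) / (e+1+j)
      = (m.factorial : ℝ) / G (e+1) (m+1) := by
  have hG : G (e+1) (m+1) ≠ 0 := (G_pos _ _ he).ne'
  rw [eq_div_iff hG, Finset.sum_mul]
  have key := vandermondeF m (-e-1) (e+1+m)
  rw [show -e-1+(e+1+m) = (m:ℝ) by ring, F_self] at key
  rw [← key]
  apply Finset.sum_congr rfl
  intro j hj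
  rw [Finset.mem_range] at hj
  have hj' : j ≤ m := by omega
  have hej : (0:ℝ) < e + 1 + j := by positivity
  rw [G_split (e+1) j m hj']
  have hF : F (-e-1) j = (-1:ℝ)^j * G (e+1) j := by
    have := G_eq_neg_F (e+1) j
    rw [show -(e+1) = -e-1 by ring] at this
    rw [this, ← mul_assoc, ← mul_pow]
    simp
  rw [hF]
  rw [show e+1+(j:ℝ) = (e+1)+j by ring] at hej ⊢
  field_simp

lemma F_pos (x : ℝ) (k : ℕ) (h : (k : ℝ) - 1 < x) : 0 < F x k := by
  rw [F]
  apply Finset.prod_pos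
  intro i hi
  rw [Finset.mem_range] at hi
  have : (i : ℝ) ≤ (k : ℝ) - 1 := by
    have : (i : ℝ) + 1 ≤ (k : ℝ) := by exact_mod_cast hi
    linarith
  linarith

lemma G_eq_F (x : ℝ) (k : ℕ) : G x k = F (x + k - 1) k := by
  rw [G, F, ← Finset.prod_range_reflect]
  apply Finset.prod_congr rfl
  intro i hi
  rw [Finset.mem_range] at hi
  rw [Nat.cast_sub (by omega : i ≤ k - 1), Nat.cast_sub (by omega : 1 ≤ k)]
  push_cast
  ring

lemma genBinom_eq (x : ℝ) (k : ℕ) : genBinom x k = F x k / (k.factorial : ℝ) := by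
  rw [genBinom, descPochhammer_eval_eq_F]

lemma genBinom_nat (n k : ℕ) : genBinom (n : ℝ) k = (n.choose k : ℝ) := by
  rw [genBinom_eq, F_nat, Nat.descFactorial_eq_factorial_mul_choose]
  push_cast
  rw [mul_comm, mul_div_assoc, div_self (by exact_mod_cast k.factorial_ne_zero), mul_one]

/-- Key Chu–Vandermonde evaluation for the moment sums. -/
lemma sumMoment (n t : ℕ) (b : ℝ) (hb : 0 < b) :
    ∑ m ∈ Finset.range (n+1),
        (-1:ℝ)^m * (n.choose m) * F ((n:ℝ)+b) m / F ((n:ℝ)+t+b+1) (m+1)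
      = F (t:ℝ) n / F ((n:ℝ)+t+b+1) (n+1) := by
  set d : ℝ := (n:ℝ)+t+b+1 with hd
  have ht0 : (0:ℝ) ≤ (t:ℝ) := t.cast_nonneg
  have hdpos : ∀ k : ℕ, (k:ℝ) ≤ (n:ℝ) + 1 → 0 < F d k := by
    intro k hk
    apply F_pos
    rw [hd]; linarith
  have hFd : F d (n+1) ≠ 0 := (hdpos (n+1) (by push_cast; linarith)).ne'
  rw [eq_div_iff hFd, Finset.sum_mul]
  have key := vandermondeG n (-((n:ℝ)+b)) (d - n)
  rw [show -((n:ℝ)+b) + (d-(n:ℝ)) = (t:ℝ)+1-(n:ℝ) by rw [hd]; ring] at key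
  have hGF : G ((t:ℝ)+1-(n:ℝ)) n = F (t:ℝ) n := by rw [G_eq_F]; congr 1; ring
  rw [hGF] at key
  rw [← key]
  apply Finset.sum_congr rfl
  intro m hm
  rw [Finset.mem_range] at hm
  have hmn : m ≤ n := by omega
  have hFm : F d (m+1) ≠ 0 := by
    refine (hdpos (m+1) ?_).ne'
    push_cast
    have : (m:ℝ) ≤ (n:ℝ) := by exact_mod_cast hmn
    linarith
  have hGm : G (-((n:ℝ)+b)) m = (-1:ℝ)^m * F ((n:ℝ)+b) m := by
    rw [G_eq_neg_F, neg_neg]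
  rw [F_split d m n hmn, hGm]
  field_simp

lemma rpow_cwa (b : ℝ) (hb : 0 < b) :
    ContinuousOn (fun r : ℝ => r ^ b) (Set.uIcc (0:ℝ) 1) := fun x _ =>
  (Real.continuousAt_rpow_const x b (Or.inr hb.le)).continuousWithinAt

lemma integrable_mul_rpow (f : ℝ → ℝ) (hf : Continuous f) (b : ℝ) (hb : 0 < b) :
    IntervalIntegrable (fun r => f r * r ^ b) volume 0 1 :=
  (hf.continuousOn.mul (rpow_cwa b hb)).intervalIntegrable

/-- Beta-type integral with natural first parameter. -/
lemma betaInt (m : ℕ) (e : ℝ) (he : 0 < e) :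
    ∫ r in (0:ℝ)..1, (1-r)^m * r ^ e = (m.factorial : ℝ) / G (e+1) (m+1) := by
  have congr1 : ∀ r ∈ Set.uIcc (0:ℝ) 1, (1-r)^m * r ^ e
      = ∑ j ∈ Finset.range (m+1), ((-1:ℝ)^j * (m.choose j)) * r ^ (e + j) := by
    intro r hr
    rw [Set.uIcc_of_le (by norm_num : (0:ℝ) ≤ 1)] at hr
    have hr0 : 0 ≤ r := hr.1
    have hone : (1 - r)^m = ∑ j ∈ Finset.range (m+1), ((-1:ℝ)^j * (m.choose j)) * r ^ j := by
      rw [sub_eq_add_neg, add_comm, add_pow]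
      apply Finset.sum_congr rfl
      intro j hj
      rw [neg_pow]
      ring
    rw [hone, Finset.sum_mul]
    apply Finset.sum_congr rfl
    intro j hj
    have : r ^ j * r ^ e = r ^ (e + j) := by
      rw [← Real.rpow_natCast r j, ← Real.rpow_add' hr0 (by positivity)]
      rw [add_comm]
    rw [mul_assoc, this]
  rw [intervalIntegral.integral_congr congr1, intervalIntegral.integral_finset_sum]
  · have : ∀ j ∈ Finset.range (m+1),
        (∫ r in (0:ℝ)..1, ((-1:ℝ)^j * (m.choose j)) * r ^ (e + j))
        = (-1:ℝ)^j * (m.choose j) / (e + 1 + j) := by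
      intro j hj
      rw [intervalIntegral.integral_const_mul, integral_rpow (Or.inl (by have : (0:ℝ) ≤ j := j.cast_nonneg; linarith))]
      rw [Real.one_rpow, Real.zero_rpow (by positivity)]
      rw [show e + (j:ℝ) + 1 = e + 1 + j by ring]
      ring
    rw [Finset.sum_congr rfl this, sumB m e (by linarith)]
  · intro j hj
    exact ((intervalIntegral.intervalIntegrable_rpow' (by have : (0:ℝ) ≤ j := j.cast_nonneg; linarith)).const_mul _)

lemma jacobiExpand (b : ℝ) (n : ℕ) (r : ℝ) :
    genJacobi 0 b n (2*r-1)
      = ∑ m ∈ Finset.range (n+1),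
          (n.choose m : ℝ) * (F ((n:ℝ)+b) m / (m.factorial : ℝ)) * ((r-1)^m * r^(n-m)) := by
  rw [genJacobi]
  apply Finset.sum_congr rfl
  intro m hm
  rw [Finset.mem_range] at hm
  have hmn : m ≤ n := by omega
  rw [add_zero, genBinom_nat n (n-m), Nat.choose_symm hmn, genBinom_eq]
  rw [show (2*r-1-1)/2 = r - 1 by ring, show (2*r-1+1)/2 = r by ring]
  ring

lemma momentInt (b : ℝ) (hb : 0 < b) (n t : ℕ) :
    ∫ r in (0:ℝ)..1, genJacobi 0 b n (2*r-1) * r^t * r ^ b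
      = F (t:ℝ) n / F ((n:ℝ)+t+b+1) (n+1) := by
  have hcongr : ∀ r ∈ Set.uIcc (0:ℝ) 1, genJacobi 0 b n (2*r-1) * r^t * r ^ b
      = ∑ m ∈ Finset.range (n+1),
          ((n.choose m : ℝ) * (F ((n:ℝ)+b) m / (m.factorial : ℝ)) * (r-1)^m * r^(n-m+t))
            * r ^ b := by
    intro r _
    rw [jacobiExpand, Finset.sum_mul, Finset.sum_mul]
    apply Finset.sum_congr rfl
    intro m hm
    rw [pow_add]
    ring
  rw [intervalIntegral.integral_congr hcongr, intervalIntegral.integral_finset_sum]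
  · have hterm : ∀ m ∈ Finset.range (n+1),
        (∫ r in (0:ℝ)..1,
          ((n.choose m : ℝ) * (F ((n:ℝ)+b) m / (m.factorial : ℝ)) * (r-1)^m * r^(n-m+t)) * r ^ b)
        = (-1:ℝ)^m * (n.choose m) * F ((n:ℝ)+b) m / F ((n:ℝ)+t+b+1) (m+1) := by
      intro m hm
      rw [Finset.mem_range] at hm
      have hmn : m ≤ n := by omega
      set c : ℝ := (n.choose m : ℝ) * (F ((n:ℝ)+b) m / (m.factorial : ℝ)) with hc
      set K : ℕ := n - m + t with hK
      have hKb : (0:ℝ) < (K:ℝ) + b := by have : (0:ℝ) ≤ (K:ℝ) := K.cast_nonneg; linarith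
      have step : ∀ r ∈ Set.uIcc (0:ℝ) 1,
          (c * (r-1)^m * r^K) * r ^ b = (c * (-1:ℝ)^m) * ((1-r)^m * r ^ ((K:ℝ) + b)) := by
        intro r hr
        rw [Set.uIcc_of_le (by norm_num : (0:ℝ) ≤ 1)] at hr
        have hr0 : 0 ≤ r := hr.1
        have h1 : (r-1)^m = (-1:ℝ)^m * (1-r)^m := by
          rw [show r - 1 = -(1-r) by ring, neg_pow]
        have h2 : (r:ℝ)^K * r ^ b = r ^ ((K:ℝ) + b) := by
          rw [← Real.rpow_natCast r K, ← Real.rpow_add' hr0 (by linarith)]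
        rw [h1, ← h2]
        ring
      rw [intervalIntegral.integral_congr step, intervalIntegral.integral_const_mul,
        betaInt m ((K:ℝ)+b) hKb]
      have hGF : G ((K:ℝ)+b+1) (m+1) = F ((n:ℝ)+t+b+1) (m+1) := by
        rw [G_eq_F]
        congr 1
        have : ((K:ℕ):ℝ) = (n:ℝ) - m + t := by
          rw [hK]; push_cast [Nat.cast_sub hmn]; ring
        rw [this]
        push_cast
        ring
      rw [hGF, hc]
      have hfac : (m.factorial : ℝ) ≠ 0 := by exact_mod_cast m.factorial_ne_zero
      field_simp
    rw [Finset.sum_congr rfl hterm, sumMoment n t b hb]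
  · intro m hm
    apply integrable_mul_rpow _ _ b hb
    continuity

lemma F_nat_zero (t n : ℕ) (h : t < n) : F (t:ℝ) n = 0 := by
  rw [F_nat, Nat.descFactorial_eq_zero_iff_lt.mpr h, Nat.cast_zero]

lemma F_succ' (x : ℝ) (n : ℕ) : F x (n+1) = x * F (x-1) n := by
  simp only [F]
  rw [Finset.prod_range_succ']
  simp only [Nat.cast_zero, sub_zero]
  rw [mul_comm]
  congr 1
  apply Finset.prod_congr rfl
  intro i _
  push_cast
  ring

lemma sumLead (n : ℕ) (b : ℝ) :
    ∑ m ∈ Finset.range (n+1), (n.choose m : ℝ) * (F ((n:ℝ)+b) m / (m.factorial : ℝ))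
      = F ((n:ℝ)+(n:ℝ)+b) n / (n.factorial : ℝ) := by
  have hn : (n.factorial : ℝ) ≠ 0 := by exact_mod_cast n.factorial_ne_zero
  rw [eq_div_iff hn, Finset.sum_mul]
  have key := vandermondeF n ((n:ℝ)+b) (n:ℝ)
  rw [show (n:ℝ)+b+(n:ℝ) = (n:ℝ)+(n:ℝ)+b by ring] at key
  rw [← key]
  apply Finset.sum_congr rfl
  intro m hm
  rw [Finset.mem_range] at hm
  have hmn : m ≤ n := by omega
  have hdf : (m.factorial : ℝ) * F (n:ℝ) (n-m) = (n.factorial : ℝ) := by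
    rw [F_nat]
    have := Nat.factorial_mul_descFactorial (by omega : n - m ≤ n)
    rw [show n - (n-m) = m from by omega] at this
    exact_mod_cast this
  have hm0 : (m.factorial : ℝ) ≠ 0 := by exact_mod_cast m.factorial_ne_zero
  field_simp
  rw [← hdf]
  ring

lemma contJ (α β : ℝ) (n : ℕ) : Continuous fun r : ℝ => genJacobi α β n (2*r-1) := by
  unfold genJacobi
  apply continuous_finset_sum
  intro m _
  fun_prop

lemma monicX1 : (Polynomial.X - 1 : Polynomial ℝ).Monic := by
  rw [show (1 : Polynomial ℝ) = Polynomial.C 1 from (Polynomial.C_1).symm]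
  exact Polynomial.monic_X_sub_C 1

lemma natDegX1 : (Polynomial.X - 1 : Polynomial ℝ).natDegree = 1 := by
  rw [show (1 : Polynomial ℝ) = Polynomial.C 1 from (Polynomial.C_1).symm]
  exact Polynomial.natDegree_X_sub_C 1

/-- The expansion polynomial of `genJacobi 0 b n (2r-1)`. -/
noncomputable def JP (b : ℝ) (n : ℕ) : Polynomial ℝ :=
  ∑ m ∈ Finset.range (n+1),
    Polynomial.C ((n.choose m : ℝ) * (F ((n:ℝ)+b) m / (m.factorial : ℝ)))
      * (Polynomial.X - 1)^m * Polynomial.X^(n-m)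

lemma JP_eval (b : ℝ) (n : ℕ) (r : ℝ) : (JP b n).eval r = genJacobi 0 b n (2*r-1) := by
  rw [jacobiExpand, JP, Polynomial.eval_finset_sum]
  apply Finset.sum_congr rfl
  intro m _
  simp [mul_assoc]

lemma JP_natDegree (b : ℝ) (n : ℕ) : (JP b n).natDegree ≤ n := by
  apply Polynomial.natDegree_sum_le_of_forall_le
  intro m hm
  rw [Finset.mem_range] at hm
  refine le_trans Polynomial.natDegree_mul_le ?_
  have h2 : (Polynomial.X^(n-m) : Polynomial ℝ).natDegree = n - m :=
    Polynomial.natDegree_X_pow _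
  have h1 : (Polynomial.C ((n.choose m : ℝ) * (F ((n:ℝ)+b) m / (m.factorial : ℝ)))
      * (Polynomial.X - 1)^m).natDegree ≤ m := by
    refine le_trans Polynomial.natDegree_mul_le ?_
    rw [Polynomial.natDegree_C, Polynomial.natDegree_pow, natDegX1]
    omega
  omega

lemma JP_coeff (b : ℝ) (n : ℕ) :
    (JP b n).coeff n = F ((n:ℝ)+(n:ℝ)+b) n / (n.factorial : ℝ) := by
  rw [JP, Polynomial.finset_sum_coeff, ← sumLead n b]
  apply Finset.sum_congr rfl
  intro m hm
  rw [Finset.mem_range] at hm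
  have hmn : m ≤ n := by omega
  rw [mul_assoc, Polynomial.coeff_C_mul]
  have hmonic : ((Polynomial.X - 1)^m * Polynomial.X^(n-m) : Polynomial ℝ).Monic :=
    (monicX1.pow m).mul (Polynomial.monic_X_pow (n-m))
  have hdeg : ((Polynomial.X - 1)^m * Polynomial.X^(n-m) : Polynomial ℝ).natDegree = n := by
    rw [(monicX1.pow m).natDegree_mul (Polynomial.monic_X_pow (n-m)),
      Polynomial.natDegree_pow, natDegX1, Polynomial.natDegree_X_pow]
    omega
  have hcn : ((Polynomial.X - 1)^m * Polynomial.X^(n-m) : Polynomial ℝ).coeff n = 1 := by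
    have := hmonic.coeff_natDegree
    rw [hdeg] at this
    exact this
  rw [hcn, mul_one]

lemma orth_le (b : ℝ) (hb : 0 < b) (n n' : ℕ) (h : n' ≤ n) :
    ∫ r in (0:ℝ)..1, genJacobi 0 b n (2*r-1) * genJacobi 0 b n' (2*r-1) * r ^ b
      = if n = n' then 1/(2*(n:ℝ)+b+1) else 0 := by
  have hcongr : ∀ r ∈ Set.uIcc (0:ℝ) 1,
      genJacobi 0 b n (2*r-1) * genJacobi 0 b n' (2*r-1) * r ^ b
      = ∑ t ∈ Finset.range (n'+1),
          (JP b n').coeff t * (genJacobi 0 b n (2*r-1) * r^t * r ^ b) := by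
    intro r _
    rw [← JP_eval b n' r, Polynomial.eval_eq_sum_range'
      (lt_of_le_of_lt (JP_natDegree b n') (Nat.lt_succ_self n'))]
    rw [Finset.mul_sum, Finset.sum_mul]
    apply Finset.sum_congr rfl
    intro t _
    ring
  rw [intervalIntegral.integral_congr hcongr, intervalIntegral.integral_finset_sum]
  · have hterm : ∀ t ∈ Finset.range (n'+1),
        (∫ r in (0:ℝ)..1, (JP b n').coeff t * (genJacobi 0 b n (2*r-1) * r^t * r ^ b))
        = (JP b n').coeff t * (F (t:ℝ) n / F ((n:ℝ)+t+b+1) (n+1)) := by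
      intro t _
      rw [intervalIntegral.integral_const_mul, momentInt b hb n t]
    rw [Finset.sum_congr rfl hterm]
    rcases lt_or_eq_of_le h with hlt | heq
    · rw [if_neg (by omega)]
      apply Finset.sum_eq_zero
      intro t ht
      rw [Finset.mem_range] at ht
      rw [F_nat_zero t n (by omega), zero_div, mul_zero]
    · have heq2 := heq.symm
      subst heq2
      rw [if_pos rfl, Finset.sum_range_succ]
      have hzero : ∑ t ∈ Finset.range n,
          (JP b n).coeff t * (F (t:ℝ) n / F ((n:ℝ)+t+b+1) (n+1)) = 0 := by
        apply Finset.sum_eq_zero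
        intro t ht
        rw [Finset.mem_range] at ht
        rw [F_nat_zero t n ht, zero_div, mul_zero]
      rw [hzero, zero_add, JP_coeff, F_self]
      have hden : F ((n:ℝ)+(n:ℝ)+b+1) (n+1) = ((n:ℝ)+(n:ℝ)+b+1) * F ((n:ℝ)+(n:ℝ)+b) n := by
        have := F_succ' ((n:ℝ)+(n:ℝ)+b+1) n
        rw [show (n:ℝ)+(n:ℝ)+b+1-1 = (n:ℝ)+(n:ℝ)+b by ring] at this
        exact this
      rw [hden]
      have hF2 : F ((n:ℝ)+(n:ℝ)+b) n ≠ 0 := by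
        refine (F_pos _ _ ?_).ne'
        have : (0:ℝ) ≤ (n:ℝ) := n.cast_nonneg
        linarith
      have hfac : (n.factorial : ℝ) ≠ 0 := by exact_mod_cast n.factorial_ne_zero
      have hpos : (n:ℝ)+(n:ℝ)+b+1 ≠ 0 := by
        have : (0:ℝ) ≤ (n:ℝ) := n.cast_nonneg
        positivity
      field_simp
      ring_nf
      have hF2' : F ((n:ℝ)*2+b) n ≠ 0 := by
        rw [show (n:ℝ)*2+b = n+n+b by ring]; exact hF2
      rw [mul_inv_cancel_right₀ hF2', mul_inv_cancel_right₀ hF2', mul_inv_cancel₀ hF2']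
      ring
  · intro t _
    have hshape : (fun r : ℝ => (JP b n').coeff t * (genJacobi 0 b n (2*r-1) * r^t * r ^ b))
        = fun r : ℝ => ((JP b n').coeff t * (genJacobi 0 b n (2*r-1) * r^t)) * r ^ b := by
      funext r
      ring
    rw [hshape]
    exact integrable_mul_rpow _ (continuous_const.mul ((contJ 0 b n).mul (continuous_pow t))) b hb

lemma orth (b : ℝ) (hb : 0 < b) (n n' : ℕ) :
    ∫ r in (0:ℝ)..1, genJacobi 0 b n (2*r-1) * genJacobi 0 b n' (2*r-1) * r ^ b
      = if n = n' then 1/(2*(n:ℝ)+b+1) else 0 := by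
  rcases le_total n' n with h | h
  · exact orth_le b hb n n' h
  · have key := orth_le b hb n' n h
    have hswap : ∫ r in (0:ℝ)..1, genJacobi 0 b n (2*r-1) * genJacobi 0 b n' (2*r-1) * r ^ b
        = ∫ r in (0:ℝ)..1, genJacobi 0 b n' (2*r-1) * genJacobi 0 b n (2*r-1) * r ^ b := by
      apply intervalIntegral.integral_congr
      intro r _
      ring
    rw [hswap, key]
    by_cases heq : n = n'
    · subst heq
      simp
    · rw [if_neg (by omega), if_neg heq]

lemma genBinom_zero' (x : ℝ) : genBinom x 0 = 1 := by
  simp [genBinom_eq, F_zero]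

lemma gB1 (x : ℝ) (i : ℕ) : ((i:ℝ)+1) * genBinom x (i+1) = (x - i) * genBinom x i := by
  have h1 : (i.factorial : ℝ) ≠ 0 := by exact_mod_cast i.factorial_ne_zero
  have h2 : ((i+1).factorial : ℝ) = ((i:ℝ)+1) * (i.factorial : ℝ) := by
    rw [Nat.factorial_succ]; push_cast; ring
  rw [genBinom_eq, genBinom_eq, F_succ, h2]
  field_simp

lemma gB_self_succ (k : ℕ) : genBinom (k:ℝ) (k+1) = 0 := by
  rw [genBinom_eq, F_nat, Nat.descFactorial_eq_zero_iff_lt.mpr (Nat.lt_succ_self k)]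
  simp

lemma gB2 (k i : ℕ) (hi : i ≤ k) :
    genBinom (k:ℝ) (k+1-i) * ((k+1-i:ℕ):ℝ) = (i:ℝ) * genBinom (k:ℝ) (k-i) := by
  rcases Nat.eq_zero_or_pos i with h0 | h0
  · subst h0
    simp [gB_self_succ k]
  · have hrw : k+1-i = (k-i)+1 := by omega
    rw [hrw]
    have := gB1 (k:ℝ) (k-i)
    have hcast : (((k-i):ℕ):ℝ) = (k:ℝ) - i := by
      rw [Nat.cast_sub hi]
    rw [hcast] at this
    have hcast2 : ((((k-i)+1):ℕ):ℝ) = (k:ℝ) - i + 1 := by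
      push_cast [Nat.cast_sub hi]; ring
    rw [hcast2]
    nlinarith [this]

lemma coeffId (b : ℝ) (k i : ℕ) (hi : i ≤ k) :
    genBinom (k:ℝ) (k-i) * genBinom ((k:ℝ)+1+b) (i+1) * ((i:ℝ)+1)
      + genBinom (k:ℝ) (k+1-i) * genBinom ((k:ℝ)+1+b) i * ((k+1-i:ℕ):ℝ)
    = ((k:ℝ)+1+b) * (genBinom (k:ℝ) (k-i) * genBinom ((k:ℝ)+1+b) i) := by
  have h1 := gB1 ((k:ℝ)+1+b) i
  have h2 := gB2 k i hi
  linear_combination genBinom (k:ℝ) (k-i) * h1 + genBinom ((k:ℝ)+1+b) i * h2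

lemma J0_one (b ζ : ℝ) : genJacobi (-1) b 0 ζ = 1 := by
  simp [genJacobi, genBinom_zero']

lemma derivJ (b : ℝ) (k : ℕ) (r : ℝ) :
    HasDerivAt (fun s => genJacobi (-1) b (k+1) (2*s-1))
      (((k:ℝ)+1+b) * genJacobi 0 (b+1) k (2*r-1)) r := by
  set c : ℕ → ℝ := fun m => genBinom (k:ℝ) (k+1-m) * genBinom ((k:ℝ)+1+b) m with hc
  have hfun : (fun s => genJacobi (-1) b (k+1) (2*s-1))
      = fun s => ∑ m ∈ Finset.range (k+2), c m * ((s-1)^m * s^(k+1-m)) := by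
    funext s
    rw [genJacobi]
    apply Finset.sum_congr rfl
    intro m _
    rw [hc]
    simp only []
    rw [show ((k+1:ℕ):ℝ) + (-1) = (k:ℝ) by push_cast; ring,
      show ((k+1:ℕ):ℝ) + b = (k:ℝ)+1+b by push_cast; ring,
      show (2*s-1-1)/2 = s-1 by ring, show (2*s-1+1)/2 = s by ring]
    ring
  rw [hfun]
  have hD : ∀ m ∈ Finset.range (k+2),
      HasDerivAt (fun s : ℝ => c m * ((s-1)^m * s^(k+1-m)))
        (c m * (((m:ℝ) * (r-1)^(m-1) * 1) * r^(k+1-m)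
          + (r-1)^m * (((k+1-m:ℕ):ℝ) * r^(k+1-m-1)))) r := by
    intro m _
    have hA : HasDerivAt (fun s : ℝ => (s-1)^m) ((m:ℝ) * (r-1)^(m-1) * 1) r :=
      ((hasDerivAt_id r).sub_const 1).pow m
    have hB : HasDerivAt (fun s : ℝ => s^(k+1-m)) (((k+1-m:ℕ):ℝ) * r^(k+1-m-1)) r :=
      hasDerivAt_pow (k+1-m) r
    exact ((hA.mul hB)).const_mul (c m)
  have hsum := HasDerivAt.sum hD
  convert hsum using 1
  · exact rfl
  · exact rfl
  · ext s
    rw [Finset.sum_apply]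
  -- now prove the sum of derivatives equals the claimed value
  have hsplit : ∑ m ∈ Finset.range (k+2),
      c m * (((m:ℝ) * (r-1)^(m-1) * 1) * r^(k+1-m)
        + (r-1)^m * (((k+1-m:ℕ):ℝ) * r^(k+1-m-1)))
      = (∑ m ∈ Finset.range (k+2), c m * (m:ℝ) * (r-1)^(m-1) * r^(k+1-m))
        + (∑ m ∈ Finset.range (k+2), c m * ((k+1-m:ℕ):ℝ) * (r-1)^m * r^(k+1-m-1)) := by
    rw [← Finset.sum_add_distrib]
    apply Finset.sum_congr rfl
    intro m _
    ring
  rw [hsplit]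
  have hS1 : ∑ m ∈ Finset.range (k+2), c m * (m:ℝ) * (r-1)^(m-1) * r^(k+1-m)
      = ∑ i ∈ Finset.range (k+1), c (i+1) * ((i:ℝ)+1) * (r-1)^i * r^(k-i) := by
    rw [Finset.sum_range_succ' (fun m => c m * (m:ℝ) * (r-1)^(m-1) * r^(k+1-m))]
    simp only [Nat.cast_zero, mul_zero, zero_mul, add_zero]
    apply Finset.sum_congr rfl
    intro i hi
    rw [Finset.mem_range] at hi
    rw [show i+1-1 = i from rfl, show k+1-(i+1) = k-i from by omega]
    push_cast
    ring
  have hS2 : ∑ m ∈ Finset.range (k+2), c m * ((k+1-m:ℕ):ℝ) * (r-1)^m * r^(k+1-m-1)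
      = ∑ i ∈ Finset.range (k+1), c i * ((k+1-i:ℕ):ℝ) * (r-1)^i * r^(k-i) := by
    rw [Finset.sum_range_succ]
    rw [show k+1-(k+1) = 0 from by omega]
    simp only [Nat.cast_zero, mul_zero, zero_mul, add_zero]
    apply Finset.sum_congr rfl
    intro i hi
    rw [Finset.mem_range] at hi
    rw [show k+1-i-1 = k-i from by omega]
  rw [hS1, hS2, ← Finset.sum_add_distrib, genJacobi, Finset.mul_sum]
  apply Finset.sum_congr rfl
  intro i hi
  rw [Finset.mem_range] at hi
  have hik : i ≤ k := by omega
  have key := coeffId b k i hik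
  rw [hc]
  simp only []
  rw [show (2*r-1-1)/2 = r-1 by ring, show (2*r-1+1)/2 = r by ring,
    show k+1-(i+1) = k-i from by omega,
    show ((k:ℕ):ℝ) + 0 = (k:ℝ) by push_cast; ring,
    show (k:ℝ) + (b+1) = (k:ℝ)+1+b by ring]
  linear_combination (-((r-1)^i * r^(k-i))) * key

/-- Stiffness-matrix orthogonality of the radial basis `J_k^{-1,2β}(2r-1)`. -/
theorem radial_stiffness_I (β : ℝ) (hβ : 0 < β) (k j : ℕ) :
    ((2 * (k : ℝ) + 2 * β) * (2 * (j : ℝ) + 2 * β) /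
        (((k : ℝ) + 2 * β) * ((j : ℝ) + 2 * β))) *
      ∫ r in (0:ℝ)..1,
        deriv (fun s => genJacobi (-1) (2 * β) k (2 * s - 1)) r *
          deriv (fun s => genJacobi (-1) (2 * β) j (2 * s - 1)) r * r ^ (2 * β + 1)
    = (if k = j then 1 else 0) * (2 * (k : ℝ) + 2 * β) * (1 - if k = 0 then 1 else 0) := by
  have hb1 : (0:ℝ) < 2*β+1 := by linarith
  have hzero : ∀ r : ℝ, deriv (fun s => genJacobi (-1) (2 * β) 0 (2 * s - 1)) r = 0 := by
    intro r
    have h0 : (fun s : ℝ => genJacobi (-1) (2*β) 0 (2*s-1)) = fun _ => (1:ℝ) :=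
      funext fun s => J0_one _ _
    rw [h0, deriv_const]
  cases k with
  | zero =>
    have hint : (∫ r in (0:ℝ)..1,
        deriv (fun s => genJacobi (-1) (2 * β) 0 (2 * s - 1)) r *
          deriv (fun s => genJacobi (-1) (2 * β) j (2 * s - 1)) r * r ^ (2 * β + 1)) = 0 := by
      have : ∀ r ∈ Set.uIcc (0:ℝ) 1,
          deriv (fun s => genJacobi (-1) (2 * β) 0 (2 * s - 1)) r *
            deriv (fun s => genJacobi (-1) (2 * β) j (2 * s - 1)) r * r ^ (2 * β + 1)
          = 0 := by
        intro r _
        rw [hzero r, zero_mul, zero_mul]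
      rw [intervalIntegral.integral_congr this, intervalIntegral.integral_zero]
    rw [hint, mul_zero]
    simp
  | succ k' =>
    cases j with
    | zero =>
      have hint : (∫ r in (0:ℝ)..1,
          deriv (fun s => genJacobi (-1) (2 * β) (k'+1) (2 * s - 1)) r *
            deriv (fun s => genJacobi (-1) (2 * β) 0 (2 * s - 1)) r * r ^ (2 * β + 1)) = 0 := by
        have : ∀ r ∈ Set.uIcc (0:ℝ) 1,
            deriv (fun s => genJacobi (-1) (2 * β) (k'+1) (2 * s - 1)) r *
              deriv (fun s => genJacobi (-1) (2 * β) 0 (2 * s - 1)) r * r ^ (2 * β + 1)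
            = 0 := by
          intro r _
          rw [hzero r, mul_zero, zero_mul]
        rw [intervalIntegral.integral_congr this, intervalIntegral.integral_zero]
      rw [hint, mul_zero]
      rw [if_neg (by omega : ¬ (k'+1 = 0))]
      ring
    | succ j' =>
      have hderiv : ∀ (m : ℕ) (r : ℝ),
          deriv (fun s => genJacobi (-1) (2*β) (m+1) (2*s-1)) r
            = ((m:ℝ)+1+2*β) * genJacobi 0 ((2*β)+1) m (2*r-1) :=
        fun m r => (derivJ (2*β) m r).deriv
      have hcongr : ∀ r ∈ Set.uIcc (0:ℝ) 1,
          deriv (fun s => genJacobi (-1) (2 * β) (k'+1) (2 * s - 1)) r *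
            deriv (fun s => genJacobi (-1) (2 * β) (j'+1) (2 * s - 1)) r * r ^ (2 * β + 1)
          = (((k':ℝ)+1+2*β) * ((j':ℝ)+1+2*β)) *
              (genJacobi 0 (2*β+1) k' (2*r-1) * genJacobi 0 (2*β+1) j' (2*r-1)
                * r ^ (2*β+1)) := by
        intro r _
        rw [hderiv k' r, hderiv j' r]
        ring
      rw [intervalIntegral.integral_congr hcongr, intervalIntegral.integral_const_mul,
        orth (2*β+1) hb1 k' j']
      have hiff : (k'+1 = j'+1) ↔ (k' = j') := by omega
      by_cases hkj : k' = j'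
      · subst hkj
        rw [if_pos rfl, if_pos rfl, if_neg (by omega : ¬ (k'+1 = 0))]
        have h1 : ((k':ℝ)+1+2*β) ≠ 0 := by
          have : (0:ℝ) ≤ (k':ℝ) := k'.cast_nonneg
          positivity
        have h2 : (2*(k':ℝ)+(2*β+1)+1) ≠ 0 := by
          have : (0:ℝ) ≤ (k':ℝ) := k'.cast_nonneg
          positivity
        push_cast
        field_simp
        ring_nf
      · rw [if_neg hkj, if_neg (by omega : ¬ (k'+1 = j'+1))]
        ring
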